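/- For the free-particle Lagrangian L(x,v) = −mc·√(η(v,v)), the Minkowski norm of the Euler–Lagrange vector of a C² path x(t) with timelike velocity equals mc·√( (η(x',x'')² − η(x',x')·η(x'',x'')) / η(x',x')³ ). (Note that the expression under the square root is nonnegative by the orthogonality of the EL vector to the timelike velocity.) -/

import Mathlib

/-- The Minkowski bilinear form on ℝ⁴ with signature (+,−,−,−). -/
noncomputable def minkowski (u v : Fin 4 → ℝ) : ℝ :=
  u 0 * v 0 - u 1 * v 1 - u 2 * v 2 - u 3 * v 3

/-- the Minkowski norm √(−η(w,w)) of the Euler–Lagrange vector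
w = −(mc/η(x',x')²)(η(x',x')x'' − η(x',x'')x') of a C² path with timelike
velocity equals mc·√((η(x',x'')² − η(x',x')η(x'',x''))/η(x',x')³). -/
theorem free_particle_el_vector_norm
    (m c : ℝ) (hm : 0 < m) (hc : 0 < c)
    (x : ℝ → Fin 4 → ℝ) (hx : ContDiff ℝ 2 x)
    (htl : ∀ t, 0 < minkowski (deriv x t) (deriv x t)) (t : ℝ) :
    Real.sqrt (-(minkowski
        ((-(m * c) / (minkowski (deriv x t) (deriv x t)) ^ 2) •
          ((minkowski (deriv x t) (deriv x t)) • deriv (deriv x) t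
            - (minkowski (deriv x t) (deriv (deriv x) t)) • deriv x t))
        ((-(m * c) / (minkowski (deriv x t) (deriv x t)) ^ 2) •
          ((minkowski (deriv x t) (deriv x t)) • deriv (deriv x) t
            - (minkowski (deriv x t) (deriv (deriv x) t)) • deriv x t)))) =
      m * c * Real.sqrt
        (((minkowski (deriv x t) (deriv (deriv x) t)) ^ 2
            - (minkowski (deriv x t) (deriv x t))
              * (minkowski (deriv (deriv x) t) (deriv (deriv x) t)))
          / (minkowski (deriv x t) (deriv x t)) ^ 3) := by
  have ha : minkowski (deriv x t) (deriv x t) ≠ 0 := (htl t).ne'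
  have key : -(minkowski
        ((-(m * c) / (minkowski (deriv x t) (deriv x t)) ^ 2) •
          ((minkowski (deriv x t) (deriv x t)) • deriv (deriv x) t
            - (minkowski (deriv x t) (deriv (deriv x) t)) • deriv x t))
        ((-(m * c) / (minkowski (deriv x t) (deriv x t)) ^ 2) •
          ((minkowski (deriv x t) (deriv x t)) • deriv (deriv x) t
            - (minkowski (deriv x t) (deriv (deriv x) t)) • deriv x t))) =
      (m * c) ^ 2 *
        (((minkowski (deriv x t) (deriv (deriv x) t)) ^ 2
            - (minkowski (deriv x t) (deriv x t))
              * (minkowski (deriv (deriv x) t) (deriv (deriv x) t)))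
          / (minkowski (deriv x t) (deriv x t)) ^ 3) := by
    simp only [minkowski, Pi.smul_apply, Pi.sub_apply, smul_eq_mul] at *
    set D := deriv x t 0 * deriv x t 0 - deriv x t 1 * deriv x t 1 - deriv x t 2 * deriv x t 2 - deriv x t 3 * deriv x t 3 with hD
    field_simp
    rw [hD]
    ring
  rw [key, Real.sqrt_mul (sq_nonneg _), Real.sqrt_sq (by positivity)]
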